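/- Let φ be a singular-expansive flow on a compact metric space X. Then the set of periodic orbits of φ is countable; that is, the collection of sets {φ_ℝ(x) : x is a periodic point of φ} is countable. -/

import Mathlib

open Set Metric Filter
open scoped Classical

variable {X : Type*}

/-- A (continuous) flow on a topological space, given as a map `φ : ℝ → X → X`. -/
def IsFlowMap [TopologicalSpace X] (φ : ℝ → X → X) : Prop :=
  Continuous (fun p : ℝ × X => φ p.1 p.2) ∧ (∀ x : X, φ 0 x = x) ∧
    ∀ t s : ℝ, ∀ x : X, φ (t + s) x = φ t (φ s x)

/-- The singular set of a flow. -/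
def SingSet (φ : ℝ → X → X) : Set X := {x : X | ∀ t : ℝ, φ t x = x}

/-- An increasing homeomorphism of `ℝ`: a strictly increasing continuous bijection. -/
def IncreasingHomeo (s : ℝ → ℝ) : Prop :=
  Continuous s ∧ StrictMono s ∧ Function.Bijective s

/-- Distance from a point to a set, with the convention that the distance
to the empty set is the diameter of the whole space. -/
noncomputable def distToSet [MetricSpace X] (z : X) (A : Set X) : ℝ :=
  if A = ∅ then Metric.diam (Set.univ : Set X) else Metric.infDist z A

/-- The orbit of a point under a flow. -/
def flowOrbit (φ : ℝ → X → X) (x : X) : Set X := Set.range fun t : ℝ => φ t x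

/-- Bowen–Walters expansivity of a flow on a subset `Λ`. -/
def ExpansiveOn [MetricSpace X] (φ : ℝ → X → X) (Λ : Set X) : Prop :=
  ∀ ε > (0:ℝ), ∃ δ > (0:ℝ), ∀ x ∈ Λ, ∀ y ∈ Λ, ∀ s : ℝ → ℝ, Continuous s → s 0 = 0 →
    (∀ t : ℝ, dist (φ t x) (φ (s t) y) ≤ δ) →
    ∃ τ ∈ Set.Icc (-ε) ε, y = φ τ x

/-- Komuro k*-expansivity of a flow on a subset `Λ`. -/
def KStarExpansiveOn [MetricSpace X] (φ : ℝ → X → X) (Λ : Set X) : Prop :=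
  ∀ ε > (0:ℝ), ∃ δ > (0:ℝ), ∀ x ∈ Λ, ∀ y ∈ Λ, ∀ s : ℝ → ℝ,
    IncreasingHomeo s → s 0 = 0 →
    (∀ t : ℝ, dist (φ t x) (φ (s t) y) ≤ δ) →
    ∃ t₀ : ℝ, ∃ τ ∈ Set.Icc (t₀ - ε) (t₀ + ε), φ (s t₀) y = φ τ x

/-- Singular expansivity of a flow on a subset `Λ`. -/
def SingularExpansiveOn [MetricSpace X] (φ : ℝ → X → X) (Λ : Set X) : Prop :=
  ∀ ε > (0:ℝ), ∃ δ > (0:ℝ), ∀ x ∈ Λ, ∀ y ∈ Λ, ∀ s : ℝ → ℝ, IncreasingHomeo s →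
    (∀ t : ℝ, dist (φ t x) (φ (s t) y) ≤ δ * distToSet (φ t x) (SingSet φ)) →
    ∃ t₀ : ℝ, ∃ τ ∈ Set.Icc (t₀ - ε) (t₀ + ε), φ (s t₀) y = φ τ x

/-- A periodic point of a flow: a nonsingular point with a positive period. -/
def IsPeriodicPoint (φ : ℝ → X → X) (x : X) : Prop :=
  x ∉ SingSet φ ∧ ∃ t : ℝ, 0 < t ∧ φ t x = x

/-- An invariant set `K` is dynamically isolated if it has a neighborhood `U`
with `K = ⋂_{t ∈ ℝ} φ_t(U)`. -/
def DynIsolated [TopologicalSpace X] (φ : ℝ → X → X) (K : Set X) : Prop :=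
  ∃ U : Set X, K ⊆ interior U ∧ K = ⋂ t : ℝ, φ t '' U

/-- Equicontinuity of a flow. -/
def EquicontinuousFlow [MetricSpace X] (φ : ℝ → X → X) : Prop :=
  ∀ ε > (0:ℝ), ∃ δ > (0:ℝ), ∀ x y : X, dist x y ≤ δ →
    ∀ t : ℝ, dist (φ t x) (φ t y) ≤ ε

/-- Singular equicontinuity of a flow. -/
def SingularEquicontinuous [MetricSpace X] (φ : ℝ → X → X) : Prop :=
  ∀ ε > (0:ℝ), ∃ δ > (0:ℝ), ∀ x y : X, dist x y ≤ δ * distToSet x (SingSet φ) →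
    ∀ t : ℝ, dist (φ t x) (φ t y) ≤ ε


open Topology

section AuxLemmas

variable [MetricSpace X] {φ : ℝ → X → X}

lemma flow_cont_t (hφ : IsFlowMap φ) (t : ℝ) : Continuous (φ t) :=
  hφ.1.comp (Continuous.prodMk_right t)

lemma flow_cont_x (hφ : IsFlowMap φ) (x : X) : Continuous (fun t : ℝ => φ t x) :=
  hφ.1.comp (continuous_id.prodMk continuous_const)

lemma flow_neg_period (hφ : IsFlowMap φ) {T : ℝ} {x : X} (hx : φ T x = x) :
    φ (-T) x = x := by
  have := hφ.2.2 (-T) T x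
  rw [neg_add_cancel, hφ.2.1, hx] at this
  exact this.symm

lemma flow_int_mul (hφ : IsFlowMap φ) {T : ℝ} {x : X} (hx : φ T x = x) (m : ℤ) :
    φ (m * T) x = x := by
  induction m using Int.induction_on with
  | zero => simpa using hφ.2.1 x
  | succ k ih =>
      have heq : ((k : ℝ) + 1) * T = T + (k : ℝ) * T := by ring
      push_cast at ih ⊢
      rw [heq, hφ.2.2, ih, hx]
  | pred k ih =>
      have heq : (-(k : ℝ) - 1) * T = -T + (-(k : ℝ)) * T := by ring
      push_cast at ih ⊢
      rw [heq, hφ.2.2, ih, flow_neg_period hφ hx]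

lemma flow_reduce (hφ : IsFlowMap φ) {T : ℝ} {x : X} (hx : φ T x = x) (a : ℝ) (m : ℤ) :
    φ (a + m * T) x = φ a x := by
  rw [hφ.2.2, flow_int_mul hφ hx m]

lemma exists_mod {T : ℝ} (hT : 0 < T) (t : ℝ) :
    ∃ r : ℝ, ∃ m : ℤ, 0 ≤ r ∧ r < T ∧ t = r + m * T :=
  ⟨t - ⌊t / T⌋ * T, ⌊t / T⌋, Int.sub_floor_div_mul_nonneg t hT,
    Int.sub_floor_div_mul_lt t hT, by ring⟩

lemma singSet_closed (hφ : IsFlowMap φ) : IsClosed (SingSet φ) := by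
  have : SingSet φ = ⋂ t : ℝ, {x : X | φ t x = x} := by
    ext x; simp [SingSet]
  rw [this]
  exact isClosed_iInter fun t => isClosed_eq (flow_cont_t hφ t) continuous_id

lemma not_sing_orbit (hφ : IsFlowMap φ) {x : X} (hx : x ∉ SingSet φ) (t : ℝ) :
    φ t x ∉ SingSet φ := by
  intro hs
  apply hx
  have hxt : x = φ t x := by
    have h1 := hs (-t)
    rw [← hφ.2.2, neg_add_cancel, hφ.2.1] at h1
    exact h1
  intro s
  rw [hxt]
  exact hs s

lemma continuous_distToSet (A : Set X) : Continuous (fun z : X => distToSet z A) := by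
  by_cases hA : A = ∅
  · simp only [distToSet, hA, if_pos rfl]; exact continuous_const
  · simp only [distToSet, hA, if_neg hA]; exact Metric.continuous_infDist_pt A

lemma distToSet_pos [CompactSpace X] (hφ : IsFlowMap φ) {z : X} (hz : z ∉ SingSet φ) :
    0 < distToSet z (SingSet φ) := by
  unfold distToSet
  split_ifs with hS
  · obtain ⟨t, ht⟩ : ∃ t, φ t z ≠ z := by
      by_contra hc; push_neg at hc; exact hz hc
    calc (0:ℝ) < dist (φ t z) z := dist_pos.2 ht
      _ ≤ diam (univ : Set X) :=
        dist_le_diam_of_mem isCompact_univ.isBounded trivial trivial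
  · have hne : (SingSet φ).Nonempty := Set.nonempty_iff_ne_empty.2 hS
    exact ((singSet_closed hφ).notMem_iff_infDist_pos hne).1 hz

lemma orbit_eq_of_meet (hφ : IsFlowMap φ) {x y : X} {a b : ℝ} (h : φ a y = φ b x) :
    flowOrbit φ y = flowOrbit φ x := by
  ext z
  constructor
  · rintro ⟨t, rfl⟩
    refine ⟨t - a + b, ?_⟩
    show φ (t - a + b) x = φ t y
    rw [hφ.2.2, ← h, ← hφ.2.2, sub_add_cancel]
  · rintro ⟨t, rfl⟩
    refine ⟨t - b + a, ?_⟩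
    show φ (t - b + a) y = φ t x
    rw [hφ.2.2, h, ← hφ.2.2, sub_add_cancel]

lemma linear_incHomeo {c : ℝ} (hc : 0 < c) : IncreasingHomeo (fun t => c * t) := by
  refine ⟨continuous_const.mul continuous_id, fun a b hab => mul_lt_mul_of_pos_left hab hc, ?_⟩
  refine Function.bijective_iff_has_inverse.2 ⟨fun t => t / c, fun t => ?_, fun t => ?_⟩
  · field_simp
  · field_simp

end AuxLemmas

section Finiteness

variable [MetricSpace X] [CompactSpace X] {φ : ℝ → X → X}

lemma Sn_finite (hφ : IsFlowMap φ) (h : SingularExpansiveOn φ Set.univ) (n : ℕ) :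
    {O : Set X | ∃ x : X, ∃ T : ℝ, 0 < T ∧ T ≤ (n : ℝ) ∧ φ T x = x ∧
      (∀ t : ℝ, (1 : ℝ) / n ≤ distToSet (φ t x) (SingSet φ)) ∧
      O = flowOrbit φ x}.Finite := by
  by_contra hinf
  rw [← Set.Infinite] at hinf
  set S := {O : Set X | ∃ x : X, ∃ T : ℝ, 0 < T ∧ T ≤ (n : ℝ) ∧ φ T x = x ∧
      (∀ t : ℝ, (1 : ℝ) / n ≤ distToSet (φ t x) (SingSet φ)) ∧
      O = flowOrbit φ x} with hSdef
  have e := hinf.natEmbedding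
  have hk : ∀ k : ℕ, ∃ x : X, ∃ T : ℝ, 0 < T ∧ T ≤ (n : ℝ) ∧ φ T x = x ∧
      (∀ t : ℝ, (1 : ℝ) / n ≤ distToSet (φ t x) (SingSet φ)) ∧
      (e k : Set X) = flowOrbit φ x := fun k => (e k).2
  choose x T hTpos hTle hTper hdist hO using hk
  -- n is positive
  have hn0 : (0 : ℝ) < n := lt_of_lt_of_le (hTpos 0) (hTle 0)
  -- convergent subsequence of points
  obtain ⟨p, -, g, hg, hgx⟩ := isCompact_univ.tendsto_subseq (fun k => Set.mem_univ (x k))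
  -- convergent subsequence of periods
  obtain ⟨T₀, hT₀mem, g', hg', hgT⟩ := (isCompact_Icc (a := (0:ℝ)) (b := (n:ℝ))).tendsto_subseq
    (x := fun k => T (g k)) (fun k => ⟨(hTpos (g k)).le, hTle (g k)⟩)
  set G : ℕ → ℕ := g ∘ g' with hGdef
  have hGmono : StrictMono G := hg.comp hg'
  have hxt : Tendsto (fun k => x (G k)) atTop (𝓝 p) := hgx.comp hg'.tendsto_atTop
  have hTt : Tendsto (fun k => T (G k)) atTop (𝓝 T₀) := hgT
  -- φ T₀ p = p
  have hpair : Tendsto (fun k => ((T (G k) : ℝ), x (G k))) atTop (𝓝 (T₀, p)) :=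
    hTt.prodMk_nhds hxt
  have hperp : φ T₀ p = p := by
    have h1 : Tendsto (fun k => φ (T (G k)) (x (G k))) atTop (𝓝 (φ T₀ p)) :=
      (hφ.1.tendsto (T₀, p)).comp hpair
    have h2 : Tendsto (fun k => φ (T (G k)) (x (G k))) atTop (𝓝 p) := by
      simp only [hTper]; exact hxt
    exact tendsto_nhds_unique h1 h2
  -- distance lower bound along the orbit of p
  have hdp : ∀ t : ℝ, (1 : ℝ) / n ≤ distToSet (φ t p) (SingSet φ) := by
    intro t
    have hconv : Tendsto (fun k => distToSet (φ t (x (G k))) (SingSet φ)) atTop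
        (𝓝 (distToSet (φ t p) (SingSet φ))) :=
      (((continuous_distToSet (SingSet φ)).comp (flow_cont_t hφ t)).tendsto p).comp hxt
    exact ge_of_tendsto hconv (Eventually.of_forall fun k => hdist (G k) t)
  -- T₀ positive
  have hT₀pos : 0 < T₀ := by
    rcases lt_or_eq_of_le hT₀mem.1 with h' | h'
    · exact h'
    · exfalso
      have hpsing : p ∈ SingSet φ := by
        intro t
        obtain := h'
        -- reduce t modulo T (G k)
        have hr : ∀ k : ℕ, ∃ r : ℝ, 0 ≤ r ∧ r < T (G k) ∧ φ t (x (G k)) = φ r (x (G k)) := by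
          intro k
          obtain ⟨r, m, hr0, hrT, hrm⟩ := exists_mod (hTpos (G k)) t
          exact ⟨r, hr0, hrT, by rw [hrm, flow_reduce hφ (hTper (G k))]⟩
        choose r hr0 hrT hre using hr
        have hrt : Tendsto r atTop (𝓝 0) := by
          have : Tendsto (fun k => T (G k)) atTop (𝓝 0) := h' ▸ hTt
          exact squeeze_zero hr0 (fun k => (hrT k).le) this
        have h1 : Tendsto (fun k => φ (r k) (x (G k))) atTop (𝓝 (φ 0 p)) :=
          (hφ.1.tendsto (0, p)).comp (hrt.prodMk_nhds hxt)
        rw [hφ.2.1] at h1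
        have h2 : Tendsto (fun k => φ t (x (G k))) atTop (𝓝 (φ t p)) :=
          ((flow_cont_t hφ t).tendsto p).comp hxt
        have h3 : Tendsto (fun k => φ t (x (G k))) atTop (𝓝 p) := by
          simp only [hre]; exact h1
        exact tendsto_nhds_unique h2 h3
      have h1 := hdp 0
      rw [hφ.2.1] at h1
      have h2 : distToSet p (SingSet φ) = 0 := by
        have hne : SingSet φ ≠ ∅ := Set.nonempty_iff_ne_empty.1 ⟨p, hpsing⟩
        simp [distToSet, hne, Metric.infDist_zero_of_mem hpsing]
      rw [h2] at h1
      have : (0:ℝ) < 1 / n := by positivity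
      linarith
  -- singular expansivity data
  obtain ⟨δ, hδ, H⟩ := h 1 one_pos
  -- uniform continuity on a compact set
  have hK : IsCompact ((Set.Icc (0:ℝ) (n:ℝ)) ×ˢ (Set.univ : Set X)) :=
    isCompact_Icc.prod isCompact_univ
  have hUC := hK.uniformContinuousOn_of_continuous hφ.1.continuousOn
  rw [Metric.uniformContinuousOn_iff] at hUC
  obtain ⟨η, hη, hUC⟩ := hUC (δ / n) (by positivity)
  -- choose a tail index
  obtain ⟨N₁, hN₁⟩ := Metric.tendsto_atTop.1 hxt η hη
  obtain ⟨N₂, hN₂⟩ := Metric.tendsto_atTop.1 hTt η hη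
  set N := max N₁ N₂ with hN
  have key : ∀ k, N ≤ k → flowOrbit φ (x (G k)) = flowOrbit φ p := by
    intro k hkN
    have hdx : dist (x (G k)) p < η := hN₁ k (le_trans (le_max_left _ _) hkN)
    have hdT : dist (T (G k)) T₀ < η := hN₂ k (le_trans (le_max_right _ _) hkN)
    set c : ℝ := T (G k) / T₀ with hc
    have hcpos : 0 < c := div_pos (hTpos (G k)) hT₀pos
    have hcT : c * T₀ = T (G k) := div_mul_cancel₀ _ hT₀pos.ne'
    have hcond : ∀ t : ℝ, dist (φ t p) (φ ((fun t => c * t) t) (x (G k))) ≤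
        δ * distToSet (φ t p) (SingSet φ) := by
      intro t
      obtain ⟨r, m, hr0, hrT, hrm⟩ := exists_mod hT₀pos t
      have h1 : φ t p = φ r p := by rw [hrm, flow_reduce hφ hperp]
      have h2 : φ (c * t) (x (G k)) = φ (c * r) (x (G k)) := by
        have : c * t = c * r + m * T (G k) := by rw [hrm, ← hcT]; ring
        rw [this, flow_reduce hφ (hTper (G k))]
      have hT₀len : T₀ ≤ (n:ℝ) := hT₀mem.2
      have hmem1 : ((r, p) : ℝ × X) ∈ (Set.Icc (0:ℝ) (n:ℝ)) ×ˢ (Set.univ : Set X) :=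
        ⟨⟨hr0, le_trans hrT.le hT₀len⟩, trivial⟩
      have hcr0 : 0 ≤ c * r := mul_nonneg hcpos.le hr0
      have hcrle : c * r ≤ (n:ℝ) := by
        have : c * r ≤ c * T₀ := mul_le_mul_of_nonneg_left hrT.le hcpos.le
        rw [hcT] at this
        exact le_trans this (hTle (G k))
      have hmem2 : ((c * r, x (G k)) : ℝ × X) ∈ (Set.Icc (0:ℝ) (n:ℝ)) ×ˢ (Set.univ : Set X) :=
        ⟨⟨hcr0, hcrle⟩, trivial⟩
      have hdr : dist r (c * r) < η := by
        rw [Real.dist_eq]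
        have heq : r - c * r = (r / T₀) * (T₀ - T (G k)) := by
          rw [hc]; field_simp
        rw [heq, abs_mul]
        have h1' : |r / T₀| ≤ 1 := by
          rw [abs_of_nonneg (div_nonneg hr0 hT₀pos.le)]
          exact (div_le_one hT₀pos).2 hrT.le
        have h2' : |T₀ - T (G k)| < η := by
          rw [abs_sub_comm, ← Real.dist_eq]; exact hdT
        calc |r / T₀| * |T₀ - T (G k)| ≤ 1 * |T₀ - T (G k)| :=
              mul_le_mul_of_nonneg_right h1' (abs_nonneg _)
          _ = |T₀ - T (G k)| := one_mul _
          _ < η := h2'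
      have hdprod : dist ((r, p) : ℝ × X) ((c * r, x (G k)) : ℝ × X) < η := by
        rw [Prod.dist_eq]
        exact max_lt hdr (by rw [dist_comm]; exact hdx)
      have hdd : dist (φ r p) (φ (c * r) (x (G k))) < δ / n := by
        have := hUC (r, p) hmem1 (c * r, x (G k)) hmem2 hdprod
        simpa using this
      calc dist (φ t p) (φ (c * t) (x (G k)))
          = dist (φ r p) (φ (c * r) (x (G k))) := by rw [h1, h2]
        _ ≤ δ / n := hdd.le
        _ = δ * (1 / n) := by ring
        _ ≤ δ * distToSet (φ t p) (SingSet φ) :=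
            mul_le_mul_of_nonneg_left (hdp t) hδ.le
    obtain ⟨t₀, τ, hτ, heq⟩ := H p trivial (x (G k)) trivial _ (linear_incHomeo hcpos) hcond
    exact orbit_eq_of_meet hφ heq
  -- two distinct orbits equal to the orbit of p: contradiction
  have h1 := key N le_rfl
  have h2 := key (N + 1) (Nat.le_succ N)
  have hOeq : (e (G N) : Set X) = (e (G (N + 1)) : Set X) := by
    rw [hO (G N), hO (G (N + 1)), h1, h2]
  have : G N = G (N + 1) := by
    have := e.injective (Subtype.ext hOeq)
    exact this
  exact hGmono.injective.ne (Nat.succ_ne_self N).symm this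

end Finiteness

theorem singular_expansive_countable_periodic_orbits
    [MetricSpace X] [CompactSpace X] (φ : ℝ → X → X) (hφ : IsFlowMap φ)
    (h : SingularExpansiveOn φ Set.univ) :
    Set.Countable {O : Set X | ∃ x : X, IsPeriodicPoint φ x ∧ O = flowOrbit φ x} := by
  have hsub : {O : Set X | ∃ x : X, IsPeriodicPoint φ x ∧ O = flowOrbit φ x} ⊆
      ⋃ n : ℕ, {O : Set X | ∃ x : X, ∃ T : ℝ, 0 < T ∧ T ≤ (n : ℝ) ∧ φ T x = x ∧
        (∀ t : ℝ, (1 : ℝ) / n ≤ distToSet (φ t x) (SingSet φ)) ∧ O = flowOrbit φ x} := by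
    rintro O ⟨x, ⟨hxs, T, hT, hTper⟩, rfl⟩
    have gcont : Continuous (fun t : ℝ => distToSet (φ t x) (SingSet φ)) :=
      (continuous_distToSet _).comp (flow_cont_x hφ x)
    obtain ⟨t₀, ht₀, hmin⟩ := isCompact_Icc.exists_isMinOn (Set.nonempty_Icc.2 hT.le)
      gcont.continuousOn
    set m := distToSet (φ t₀ x) (SingSet φ) with hm
    have hmpos : 0 < m := distToSet_pos hφ (not_sing_orbit hφ hxs t₀)
    have hmall : ∀ t : ℝ, m ≤ distToSet (φ t x) (SingSet φ) := by
      intro t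
      obtain ⟨r, mi, hr0, hrT, hrm⟩ := exists_mod hT t
      have hred : φ t x = φ r x := by rw [hrm, flow_reduce hφ hTper]
      rw [hred]
      exact hmin ⟨hr0, hrT.le⟩
    obtain ⟨n, hn⟩ := exists_nat_ge (max T (1 / m))
    refine Set.mem_iUnion.2 ⟨n, x, T, hT, le_trans (le_max_left _ _) hn, hTper, ?_, rfl⟩
    intro t
    have hn0 : (0:ℝ) < n := lt_of_lt_of_le hT (le_trans (le_max_left _ _) hn)
    have h1m : 1 / m ≤ n := le_trans (le_max_right _ _) hn
    have h1n : (1:ℝ) / n ≤ m := (one_div_le hn0 hmpos).2 h1m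
    exact le_trans h1n (hmall t)
  exact Set.Countable.mono hsub (Set.countable_iUnion fun n => (Sn_finite hφ h n).countable)
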